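/- Let 𝔠 = {C^0,…,C^{M−1}} be an (M,M,N)-complete complementary code with sequences c^k_m of length N, let ω = exp(2πi/M) and f_{i,j} = ω^{i·j}, and for 0 ≤ k ≤ M−1 let B̃_k be the length-M²N sequence whose entry at position i·MN + j·N + n equals f_{i,j} · c^j_{k,n}. Then for all 0 ≤ k1 ≠ k2 ≤ M−1, the periodic cross-correlation satisfies R_{B̃_{k1}, B̃_{k2}}(τ) = 0 for all 0 ≤ τ ≤ (M−1)N. -/

import Mathlib

open Finset

/-- Aperiodic cross-correlation of length-`L` complex sequences at shift `0 ≤ τ`. -/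
noncomputable def aCorr (a b : ℕ → ℂ) (L τ : ℕ) : ℂ :=
  ∑ k ∈ Finset.range (L - τ), a k * (starRingEnd ℂ) (b (k + τ))

/-- Periodic cross-correlation of length-`L` complex sequences at shift `τ`. -/
noncomputable def pCorr (a b : ℕ → ℂ) (L τ : ℕ) : ℂ :=
  ∑ k ∈ Finset.range L, a k * (starRingEnd ℂ) (b ((k + τ) % L))

/-- For an `(M,M,N)`-CCC with sequences `c k m` (set `k`, member `m`), the length-`M²N`
sequence `B̃ k` whose entry at position `i·MN + j·N + n` is `ω^(i·j) · c j k n`,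
where `ω = exp(2πi/M)`. -/
noncomputable def Bseq (M N : ℕ) (c : ℕ → ℕ → ℕ → ℂ) (k : ℕ) : ℕ → ℂ :=
  fun n =>
    Complex.exp (2 * Real.pi * Complex.I * ((n / (M * N) : ℕ) : ℂ) *
        (((n % (M * N)) / N : ℕ) : ℂ) / (M : ℂ)) *
      c ((n % (M * N)) / N) k (n % N)

private lemma sum_range_mul' {β : Type*} [AddCommMonoid β] (f : ℕ → β) (a b : ℕ) :
    ∑ n ∈ Finset.range (a * b), f n
      = ∑ i ∈ Finset.range a, ∑ r ∈ Finset.range b, f (i * b + r) := by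
  induction a with
  | zero => simp
  | succ a ih =>
      rw [Nat.succ_mul, Finset.sum_range_add, ih, Finset.sum_range_succ]

noncomputable def eph (M : ℕ) (t : ℤ) : ℂ :=
  Complex.exp (2 * Real.pi * Complex.I * (t : ℂ) / M)

lemma eph_add (M : ℕ) (s t : ℤ) : eph M (s + t) = eph M s * eph M t := by
  rw [eph, eph, eph, ← Complex.exp_add]
  congr 1
  push_cast
  ring

lemma eph_int_mul (M : ℕ) (hM : 0 < M) (t : ℤ) : eph M (M * t) = 1 := by
  have hM0 : (M : ℂ) ≠ 0 := Nat.cast_ne_zero.mpr hM.ne'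
  rw [eph, show (2 * Real.pi * Complex.I * ((M * t : ℤ) : ℂ) / M) = t * (2 * Real.pi * Complex.I) by
    push_cast
    field_simp]
  exact Complex.exp_int_mul_two_pi_mul_I t

lemma conj_eph (M : ℕ) (t : ℤ) : (starRingEnd ℂ) (eph M t) = eph M (-t) := by
  rw [eph, eph, ← Complex.exp_conj]
  congr 1
  simp [map_div₀, Complex.conj_I, map_ofNat]

lemma eph_geom (M : ℕ) (hM : 0 < M) (t : ℤ) (ht : ¬ (M : ℤ) ∣ t) :
    ∑ i ∈ Finset.range M, eph M (i * t) = 0 := by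
  have hpow : ∀ i : ℕ, eph M ((i : ℤ) * t) = (eph M t) ^ i := by
    intro i
    rw [eph, eph, ← Complex.exp_nat_mul]
    congr 1
    push_cast
    ring
  have hne : eph M t ≠ 1 := by
    intro h
    rw [eph, Complex.exp_eq_one_iff] at h
    obtain ⟨n, hn⟩ := h
    apply ht
    refine ⟨n, ?_⟩
    have h2 : (2 * Real.pi * Complex.I) ≠ 0 := by
      simp [Real.pi_ne_zero, Complex.I_ne_zero, Complex.ofReal_ne_zero]
    have hM0 : (M : ℂ) ≠ 0 := by exact_mod_cast hM.ne'
    have h3 : 2 * (Real.pi : ℂ) * Complex.I * (t : ℂ)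
        = 2 * (Real.pi : ℂ) * Complex.I * ((M * n : ℤ) : ℂ) := by
      field_simp at hn
      push_cast
      linear_combination (2 * (Real.pi : ℂ) * Complex.I) * hn
    have h4 : (t : ℂ) = ((M * n : ℤ) : ℂ) := mul_left_cancel₀ h2 h3
    exact_mod_cast h4
  have hM1 : (eph M t) ^ M = 1 := by
    rw [← hpow, show ((M : ℕ) : ℤ) * t = (M : ℤ) * t by norm_num, eph_int_mul M hM]
  calc ∑ i ∈ Finset.range M, eph M (i * t) = ∑ i ∈ Finset.range M, (eph M t) ^ i := by
        exact Finset.sum_congr rfl fun i _ => hpow i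
    _ = ((eph M t) ^ M - 1) / (eph M t - 1) := geom_sum_eq hne M
    _ = 0 := by rw [hM1]; simp

private lemma pair_sum (N τ : ℕ) (h : ℕ → ℕ → ℂ) :
    (∑ n ∈ Finset.range N, ∑ n' ∈ Finset.range N,
        (if (-(n' : ℤ) + n = -(τ : ℤ)) then h n n' else 0))
      = ∑ n ∈ Finset.range (N - τ), h n (n + τ) := by
  have step1 : ∀ n : ℕ, (∑ n' ∈ Finset.range N,
      (if (-(n' : ℤ) + n = -(τ : ℤ)) then h n n' else 0))
      = if n + τ < N then h n (n + τ) else 0 := by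
    intro n
    have : (∑ n' ∈ Finset.range N,
        (if (-(n' : ℤ) + n = -(τ : ℤ)) then h n n' else 0))
        = ∑ n' ∈ Finset.range N, (if n' = n + τ then h n n' else 0) := by
      refine Finset.sum_congr rfl fun n' _ => ?_
      refine if_congr ?_ rfl rfl
      omega
    rw [this, Finset.sum_ite_eq' (Finset.range N) (n + τ) (fun n' => h n n')]
    simp [Finset.mem_range]
  calc (∑ n ∈ Finset.range N, ∑ n' ∈ Finset.range N,
        (if (-(n' : ℤ) + n = -(τ : ℤ)) then h n n' else 0))
      = ∑ n ∈ Finset.range N, (if n + τ < N then h n (n + τ) else 0) :=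
        Finset.sum_congr rfl fun n _ => step1 n
    _ = ∑ n ∈ (Finset.range N).filter (fun n => n + τ < N), h n (n + τ) :=
        (Finset.sum_filter _ _).symm
    _ = ∑ n ∈ Finset.range (N - τ), h n (n + τ) := by
        congr 1
        ext a
        simp only [Finset.mem_filter, Finset.mem_range]
        omega

private lemma mul_singles (N : ℕ) (x y : ℕ → ℂ) (s t : ℕ → ℤ) :
    ((∑ n ∈ Finset.range N, AddMonoidAlgebra.single (s n) (x n) : AddMonoidAlgebra ℂ ℤ) *
        (∑ n' ∈ Finset.range N, AddMonoidAlgebra.single (t n') (y n') : AddMonoidAlgebra ℂ ℤ))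
      = ∑ n ∈ Finset.range N, ∑ n' ∈ Finset.range N,
          AddMonoidAlgebra.single (s n + t n') (x n * y n') := by
  rw [Finset.sum_mul_sum]
  exact Finset.sum_congr rfl fun n _ => Finset.sum_congr rfl fun n' _ =>
    AddMonoidAlgebra.single_mul_single _ _ _ _

private lemma coeff_sum (N : ℕ) (g : ℕ → ℕ → ℂ) (s : ℕ → ℕ → ℤ) (d : ℤ) :
    ((∑ n ∈ Finset.range N, ∑ n' ∈ Finset.range N,
        AddMonoidAlgebra.single (s n n') (g n n') : AddMonoidAlgebra ℂ ℤ)).coeff d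
      = ∑ n ∈ Finset.range N, ∑ n' ∈ Finset.range N,
          (if s n n' = d then g n n' else 0) := by
  rw [AddMonoidAlgebra.coeff_sum, Finset.sum_apply']
  refine Finset.sum_congr rfl fun n _ => ?_
  rw [AddMonoidAlgebra.coeff_sum, Finset.sum_apply']
  exact Finset.sum_congr rfl fun n' _ => Finsupp.single_apply

private lemma transpose_ccc (M N : ℕ) (hM : 0 < M) (hN : 0 < N)
    (c : ℕ → ℕ → ℕ → ℂ)
    (hCCC : ∀ k1 < M, ∀ k2 < M, ∀ τ < N,
      ∑ m ∈ Finset.range M, aCorr (c k1 m) (c k2 m) N τ =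
        if k1 = k2 ∧ τ = 0 then (M * N : ℂ) else 0)
    (k1 k2 : ℕ) (hk1 : k1 < M) (hk2 : k2 < M) (hne : k1 ≠ k2) (v : ℕ) :
    ∑ j ∈ Finset.range M, aCorr (c j k1) (c j k2) N v = 0 := by
  classical
  set w : ℂ := ((M : ℂ) * N)⁻¹ with hw
  have hM0 : (M : ℂ) ≠ 0 := Nat.cast_ne_zero.mpr hM.ne'
  have hN0 : (N : ℂ) ≠ 0 := Nat.cast_ne_zero.mpr hN.ne'
  have hMN : ((M : ℂ) * N) ≠ 0 := mul_ne_zero hM0 hN0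
  have hw0 : w ≠ 0 := inv_ne_zero hMN
  set A : Matrix (Fin M) (Fin M) (AddMonoidAlgebra ℂ ℤ) := Matrix.of fun k m =>
    (∑ n ∈ Finset.range N, AddMonoidAlgebra.single (n : ℤ) (c k m n) : AddMonoidAlgebra ℂ ℤ)
    with hA
  set B : Matrix (Fin M) (Fin M) (AddMonoidAlgebra ℂ ℤ) := Matrix.of fun m k =>
    (∑ n ∈ Finset.range N, AddMonoidAlgebra.single (-(n : ℤ)) ((starRingEnd ℂ) (c k m n) * w) :
      AddMonoidAlgebra ℂ ℤ) with hB
  have hAB : A * B = 1 := by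
    ext p q d
    rw [Matrix.mul_apply, AddMonoidAlgebra.coeff_sum, Finset.sum_apply']
    have e1 : ∀ k : Fin M, (A p k * B k q).coeff d
        = ∑ n ∈ Finset.range N, ∑ n' ∈ Finset.range N,
            (if ((n : ℤ) + -(n' : ℤ) = d) then
              c p k n * ((starRingEnd ℂ) (c q k n') * w) else 0) := by
      intro k
      rw [hA, hB, Matrix.of_apply, Matrix.of_apply, mul_singles, coeff_sum]
    rw [Finset.sum_congr rfl fun k _ => e1 k]
    have hfin : ∀ F : ℕ → ℂ, (∑ k : Fin M, F (k : ℕ)) = ∑ k ∈ Finset.range M, F k :=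
      fun F => Fin.sum_univ_eq_sum_range F M
    have hone : ((1 : Matrix (Fin M) (Fin M) (AddMonoidAlgebra ℂ ℤ)) p q).coeff d
        = if p = q ∧ d = 0 then 1 else 0 := by
      by_cases hpq : p = q
      · rw [hpq, Matrix.one_apply_eq, AddMonoidAlgebra.one_def, AddMonoidAlgebra.coeff_single, Finsupp.single_apply]
        simp [hpq, eq_comm]
      · rw [Matrix.one_apply_ne hpq]
        simp [hpq]
    rw [hone]
    rcases le_or_gt d 0 with hd | hd
    · set τ : ℕ := (-d).toNat with hτ
      have hdτ : d = -(τ : ℤ) := by omega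
      have e3 : ∀ k : Fin M,
          (∑ n ∈ Finset.range N, ∑ n' ∈ Finset.range N,
            (if ((n : ℤ) + -(n' : ℤ) = d) then
              c p k n * ((starRingEnd ℂ) (c q k n') * w) else 0))
          = (∑ n ∈ Finset.range (N - τ),
              c p k n * (starRingEnd ℂ) (c q k (n + τ))) * w := by
        intro k
        have := pair_sum N τ (fun n n' => c p k n * ((starRingEnd ℂ) (c q k n') * w))
        rw [show (∑ n ∈ Finset.range N, ∑ n' ∈ Finset.range N,
            (if ((n : ℤ) + -(n' : ℤ) = d) then
              c p k n * ((starRingEnd ℂ) (c q k n') * w) else 0))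
          = ∑ n ∈ Finset.range N, ∑ n' ∈ Finset.range N,
            (if (-(n' : ℤ) + (n : ℤ) = -(τ : ℤ)) then
              c p k n * ((starRingEnd ℂ) (c q k n') * w) else 0) from
          Finset.sum_congr rfl fun n _ => Finset.sum_congr rfl fun n' _ =>
            if_congr (by omega) rfl rfl, this, Finset.sum_mul]
        exact Finset.sum_congr rfl fun n _ => by ring
      rw [Finset.sum_congr rfl fun k _ => e3 k, ← Finset.sum_mul,
        hfin (fun k => ∑ n ∈ Finset.range (N - τ),
          c p k n * (starRingEnd ℂ) (c q k (n + τ)))]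
      by_cases hτN : τ < N
      · have hc := hCCC p p.isLt q q.isLt τ hτN
        unfold aCorr at hc
        rw [hc]
        by_cases hpq : (p : ℕ) = q
        · have hpq' : p = q := Fin.ext hpq
          by_cases hτ0 : τ = 0
          · have hd0 : d = 0 := by omega
            simp [hpq, hτ0, hpq', hd0, hw, hMN]
            field_simp
          · have hd0 : ¬ (d = 0) := by omega
            simp [hpq, hτ0, hpq', hd0]
        · have hpq' : ¬ (p = q) := fun h => hpq (by rw [h])
          simp [hpq, hpq']
      · have hNτ : N - τ = 0 := by omega
        have hd0 : ¬ (d = 0) := by omega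
        simp [hNτ, hd0]
    · -- d > 0
      set τ : ℕ := d.toNat with hτ
      have hτ1 : 1 ≤ τ := by omega
      have e3 : ∀ k : Fin M,
          (∑ n ∈ Finset.range N, ∑ n' ∈ Finset.range N,
            (if ((n : ℤ) + -(n' : ℤ) = d) then
              c p k n * ((starRingEnd ℂ) (c q k n') * w) else 0))
          = (∑ n ∈ Finset.range (N - τ),
              (starRingEnd ℂ) (c q k n) * c p k (n + τ)) * w := by
        intro k
        rw [Finset.sum_comm]
        have := pair_sum N τ
          (fun a b => c p k b * ((starRingEnd ℂ) (c q k a) * w))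
        rw [show (∑ n' ∈ Finset.range N, ∑ n ∈ Finset.range N,
            (if ((n : ℤ) + -(n' : ℤ) = d) then
              c p k n * ((starRingEnd ℂ) (c q k n') * w) else 0))
          = ∑ a ∈ Finset.range N, ∑ b ∈ Finset.range N,
            (if (-(b : ℤ) + (a : ℤ) = -(τ : ℤ)) then
              c p k b * ((starRingEnd ℂ) (c q k a) * w) else 0) from
          Finset.sum_congr rfl fun a _ => Finset.sum_congr rfl fun b _ =>
            if_congr (by omega) rfl rfl, this, Finset.sum_mul]
        exact Finset.sum_congr rfl fun n _ => by ring
      rw [Finset.sum_congr rfl fun k _ => e3 k, ← Finset.sum_mul,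
        hfin (fun k => ∑ n ∈ Finset.range (N - τ),
          (starRingEnd ℂ) (c q k n) * c p k (n + τ))]
      have hd0 : ¬ (d = 0) := by omega
      by_cases hτN : τ < N
      · have hc := congrArg (starRingEnd ℂ) (hCCC q q.isLt p p.isLt τ hτN)
        unfold aCorr at hc
        simp only [map_sum, map_mul, Complex.conj_conj] at hc
        rw [hc]
        have hτ0 : ¬ ((q : ℕ) = (p : ℕ) ∧ τ = 0) := fun h => by omega
        simp [hτ0, hd0]
      · have hNτ : N - τ = 0 := by omega
        simp [hNτ, hd0]
  have hBA : B * A = 1 := mul_eq_one_comm.mp hAB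
  set p : Fin M := ⟨k2, hk2⟩ with hp
  set q : Fin M := ⟨k1, hk1⟩ with hq
  have hpq : p ≠ q := by
    intro h
    exact hne (by simpa [hp, hq, Fin.ext_iff] using h.symm)
  have h0 : (B * A) p q = 0 := by rw [hBA]; exact Matrix.one_apply_ne hpq
  have h1 : ((B * A) p q).coeff (-(v : ℤ)) = 0 := by rw [h0]; rfl
  rw [Matrix.mul_apply, AddMonoidAlgebra.coeff_sum, Finset.sum_apply'] at h1
  have e1 : ∀ k : Fin M, (B p k * A k q).coeff (-(v : ℤ))
      = (∑ a ∈ Finset.range (N - v),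
          c k q a * (starRingEnd ℂ) (c k p (a + v))) * w := by
    intro k
    rw [hA, hB, Matrix.of_apply, Matrix.of_apply, mul_singles, coeff_sum,
      Finset.sum_comm]
    have := pair_sum N v
      (fun a b => (starRingEnd ℂ) (c k p b) * w * c k q a)
    rw [show (∑ n' ∈ Finset.range N, ∑ n ∈ Finset.range N,
        (if (-(n : ℤ) + (n' : ℤ) = -(v : ℤ)) then
          (starRingEnd ℂ) (c k p n) * w * c k q n' else 0))
      = ∑ a ∈ Finset.range N, ∑ b ∈ Finset.range N,
        (if (-(b : ℤ) + (a : ℤ) = -(v : ℤ)) then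
          (starRingEnd ℂ) (c k p b) * w * c k q a else 0) from rfl, this,
      Finset.sum_mul]
    exact Finset.sum_congr rfl fun n _ => by ring
  rw [Finset.sum_congr rfl fun k _ => e1 k, ← Finset.sum_mul,
    Fin.sum_univ_eq_sum_range (fun k => ∑ a ∈ Finset.range (N - v),
      c k k1 a * (starRingEnd ℂ) (c k k2 (a + v))) M] at h1
  have h2 := (mul_eq_zero.mp h1).resolve_right hw0
  unfold aCorr
  exact h2

private lemma Beval (M N : ℕ) (hM : 0 < M) (hN : 0 < N) (c : ℕ → ℕ → ℕ → ℂ)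
    (k i j r : ℕ) (hj : j < M) (hr : r < N) :
    Bseq M N c k ((i * M + j) * N + r) = eph M ((i : ℤ) * j) * c j k r := by
  have hlt : j * N + r < M * N := by
    calc j * N + r < j * N + N := by omega
      _ = (j + 1) * N := by ring
      _ ≤ M * N := Nat.mul_le_mul_right N hj
  have key : (i * M + j) * N + r = (M * N) * i + (j * N + r) := by ring
  have h1 : ((i * M + j) * N + r) / (M * N) = i := by
    rw [key, Nat.mul_add_div (Nat.mul_pos hM hN), Nat.div_eq_of_lt hlt, add_zero]
  have h2 : (((i * M + j) * N + r) % (M * N)) = j * N + r := by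
    rw [key, Nat.mul_add_mod, Nat.mod_eq_of_lt hlt]
  have h3 : (j * N + r) / N = j := by
    rw [show j * N + r = N * j + r by ring, Nat.mul_add_div hN,
      Nat.div_eq_of_lt hr, add_zero]
  have h4 : ((i * M + j) * N + r) % N = r := by
    rw [show (i * M + j) * N + r = N * (i * M + j) + r by ring, Nat.mul_add_mod,
      Nat.mod_eq_of_lt hr]
  rw [Bseq, h1, h2, h3, h4, eph]
  congr 2
  push_cast
  ring

private lemma Bper (M N : ℕ) (hM : 0 < M) (hN : 0 < N) (c : ℕ → ℕ → ℕ → ℂ)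
    (k m : ℕ) :
    Bseq M N c k (m % (M ^ 2 * N)) = Bseq M N c k m := by
  have hMN : 0 < M * N := Nat.mul_pos hM hN
  have e1 : m % (M ^ 2 * N) % N = m % N :=
    Nat.mod_mod_of_dvd m ⟨M ^ 2, by ring⟩
  have e2 : m % (M ^ 2 * N) % (M * N) = m % (M * N) :=
    Nat.mod_mod_of_dvd m ⟨M, by ring⟩
  have e3 : m / (M * N) = M * (m / (M ^ 2 * N)) + m % (M ^ 2 * N) / (M * N) := by
    conv_lhs => rw [← Nat.div_add_mod m (M ^ 2 * N)]
    rw [show M ^ 2 * N * (m / (M ^ 2 * N)) + m % (M ^ 2 * N)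
        = (M * N) * (M * (m / (M ^ 2 * N))) + m % (M ^ 2 * N) by ring,
      Nat.mul_add_div hMN]
  set a := m / (M ^ 2 * N) with ha
  set b := m % (M ^ 2 * N) / (M * N) with hb
  set g := m % (M * N) / N with hg
  have harg : 2 * Real.pi * Complex.I * ((M * a + b : ℕ) : ℂ) * ((g : ℕ) : ℂ) / M
      = 2 * Real.pi * Complex.I * ((b : ℕ) : ℂ) * ((g : ℕ) : ℂ) / M
        + ((a * g : ℕ) : ℤ) * (2 * Real.pi * Complex.I) := by
    have hM0 : (M : ℂ) ≠ 0 := Nat.cast_ne_zero.mpr hM.ne'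
    push_cast
    field_simp
    ring
  rw [Bseq, Bseq, e1, e2, e3, harg, Complex.exp_add, Complex.exp_int_mul_two_pi_mul_I]
  ring

private lemma phase_sum_zero (M : ℕ) (hM : 0 < M) (w j : ℕ) (hj : j < M)
    (hw : ¬ M ∣ w) :
    ∑ i ∈ Finset.range M, eph M ((i : ℤ) * j) *
      (starRingEnd ℂ) (eph M (((i + (j + w) / M : ℕ) : ℤ) * (((j + w) % M : ℕ) : ℤ))) = 0 := by
  have hd : (M : ℤ) * (((j + w) / M : ℕ) : ℤ) + (((j + w) % M : ℕ) : ℤ) = (j : ℤ) + w := by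
    exact_mod_cast Nat.div_add_mod (j + w) M
  have hterm : ∀ i : ℕ, eph M ((i : ℤ) * j) *
      (starRingEnd ℂ) (eph M (((i + (j + w) / M : ℕ) : ℤ) * (((j + w) % M : ℕ) : ℤ)))
      = eph M (-((((j + w) / M : ℕ) : ℤ) * (((j + w) % M : ℕ) : ℤ))) *
          eph M ((i : ℤ) * ((j : ℤ) - (((j + w) % M : ℕ) : ℤ))) := by
    intro i
    rw [conj_eph, ← eph_add, ← eph_add]
    congr 1
    push_cast
    ring
  rw [Finset.sum_congr rfl fun i _ => hterm i, ← Finset.mul_sum,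
    eph_geom M hM ((j : ℤ) - (((j + w) % M : ℕ) : ℤ)) ?_, mul_zero]
  intro hdvd
  apply hw
  obtain ⟨e, he⟩ := hdvd
  have : (w : ℤ) = (M : ℤ) * (((j + w) / M : ℕ) - e) := by linear_combination -hd - he
  exact_mod_cast Dvd.intro _ this.symm

theorem statement13 (M N : ℕ) (hM : 0 < M) (hN : 0 < N)
    (c : ℕ → ℕ → ℕ → ℂ)
    (hCCC : ∀ k1 < M, ∀ k2 < M, ∀ τ < N,
      ∑ m ∈ Finset.range M, aCorr (c k1 m) (c k2 m) N τ =
        if k1 = k2 ∧ τ = 0 then (M * N : ℂ) else 0) :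
    ∀ k1 < M, ∀ k2 < M, k1 ≠ k2 → ∀ τ, τ ≤ (M - 1) * N →
      pCorr (Bseq M N c k1) (Bseq M N c k2) (M ^ 2 * N) τ = 0 := by
  intro k1 hk1 k2 hk2 hne τ hτ
  have hM2 : 2 ≤ M := by omega
  obtain ⟨u, v, hvN, huv⟩ : ∃ u v, v < N ∧ u * N + v = τ :=
    ⟨τ / N, τ % N, Nat.mod_lt _ hN, by rw [mul_comm]; exact Nat.div_add_mod τ N⟩
  have huM : u ≤ M - 1 := by
    have h1 : u * N ≤ (M - 1) * N := by
      calc u * N ≤ u * N + v := Nat.le_add_right _ _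
        _ = τ := huv
        _ ≤ (M - 1) * N := hτ
    exact Nat.le_of_mul_le_mul_right h1 hN
  have hsplit : ∀ f : ℕ → ℂ, ∑ r ∈ Finset.range N, f r
      = ∑ r ∈ Finset.range (N - v), f r + ∑ t ∈ Finset.range v, f (N - v + t) := by
    intro f
    have hNv : N - v + v = N := by omega
    rw [← hNv, Finset.sum_range_add]
    simp [hNv]
  rw [pCorr]
  have step1 : ∑ n ∈ Finset.range (M ^ 2 * N),
        Bseq M N c k1 n * (starRingEnd ℂ) (Bseq M N c k2 ((n + τ) % (M ^ 2 * N)))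
      = ∑ i ∈ Finset.range M, ∑ j ∈ Finset.range M, ∑ r ∈ Finset.range N,
          Bseq M N c k1 ((i * M + j) * N + r) *
            (starRingEnd ℂ) (Bseq M N c k2 ((i * M + j) * N + r + τ)) := by
    have h0 : ∀ n : ℕ, Bseq M N c k2 ((n + τ) % (M ^ 2 * N)) = Bseq M N c k2 (n + τ) :=
      fun n => Bper M N hM hN c k2 (n + τ)
    simp only [h0]
    rw [show M ^ 2 * N = M * (M * N) by ring, sum_range_mul']
    refine Finset.sum_congr rfl fun i _ => ?_
    rw [sum_range_mul']
    refine Finset.sum_congr rfl fun j _ => Finset.sum_congr rfl fun r _ => ?_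
    rw [show i * (M * N) + (j * N + r) = (i * M + j) * N + r by ring]
  rw [step1]
  have step2 : ∀ i ∈ Finset.range M, ∀ j ∈ Finset.range M,
      (∑ r ∈ Finset.range N,
        Bseq M N c k1 ((i * M + j) * N + r) *
          (starRingEnd ℂ) (Bseq M N c k2 ((i * M + j) * N + r + τ)))
      = (eph M ((i : ℤ) * j) *
          (starRingEnd ℂ) (eph M (((i + (j + u) / M : ℕ) : ℤ) * (((j + u) % M : ℕ) : ℤ)))) *
          (∑ r ∈ Finset.range (N - v),
            c j k1 r * (starRingEnd ℂ) (c ((j + u) % M) k2 (r + v)))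
        + (eph M ((i : ℤ) * j) *
            (starRingEnd ℂ)
              (eph M (((i + (j + (u + 1)) / M : ℕ) : ℤ) * (((j + (u + 1)) % M : ℕ) : ℤ)))) *
          (∑ t ∈ Finset.range v,
            c j k1 (N - v + t) * (starRingEnd ℂ) (c ((j + (u + 1)) % M) k2 t)) := by
    intro i _ j hj
    rw [Finset.mem_range] at hj
    rw [hsplit]
    congr 1
    · rw [Finset.mul_sum]
      refine Finset.sum_congr rfl fun r hr => ?_
      rw [Finset.mem_range] at hr
      have hidx : (i * M + j) * N + r + τ
          = ((i + (j + u) / M) * M + (j + u) % M) * N + (r + v) := by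
        have hd := Nat.div_add_mod (j + u) M
        calc (i * M + j) * N + r + τ = (i * M + j + u) * N + (r + v) := by
              rw [← huv]; ring
          _ = (i * M + (M * ((j + u) / M) + (j + u) % M)) * N + (r + v) := by
              rw [hd]; ring
          _ = ((i + (j + u) / M) * M + (j + u) % M) * N + (r + v) := by ring
      rw [Beval M N hM hN c k1 i j r hj (by omega), hidx,
        Beval M N hM hN c k2 (i + (j + u) / M) ((j + u) % M) (r + v)
          (Nat.mod_lt _ hM) (by omega), map_mul]
      ring
    · rw [Finset.mul_sum]
      refine Finset.sum_congr rfl fun t ht => ?_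
      rw [Finset.mem_range] at ht
      have hidx : (i * M + j) * N + (N - v + t) + τ
          = ((i + (j + (u + 1)) / M) * M + (j + (u + 1)) % M) * N + t := by
        have hd := Nat.div_add_mod (j + (u + 1)) M
        have h2 : N - v + t + v = t + N := by omega
        calc (i * M + j) * N + (N - v + t) + τ
            = (i * M + j) * N + u * N + (N - v + t + v) := by rw [← huv]; ring
          _ = (i * M + j) * N + u * N + (t + N) := by rw [h2]
          _ = (i * M + (j + (u + 1))) * N + t := by ring
          _ = (i * M + (M * ((j + (u + 1)) / M) + (j + (u + 1)) % M)) * N + t := by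
              rw [hd]
          _ = ((i + (j + (u + 1)) / M) * M + (j + (u + 1)) % M) * N + t := by ring
      rw [Beval M N hM hN c k1 i j (N - v + t) hj (by omega), hidx,
        Beval M N hM hN c k2 (i + (j + (u + 1)) / M) ((j + (u + 1)) % M) t
          (Nat.mod_lt _ hM) (by omega), map_mul]
      ring
  rw [Finset.sum_congr rfl fun i hi => Finset.sum_congr rfl fun j hj => step2 i hi j hj]
  rw [Finset.sum_comm]
  have step3 : ∀ j ∈ Finset.range M,
      (∑ i ∈ Finset.range M,
        ((eph M ((i : ℤ) * j) *
          (starRingEnd ℂ) (eph M (((i + (j + u) / M : ℕ) : ℤ) * (((j + u) % M : ℕ) : ℤ)))) *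
          (∑ r ∈ Finset.range (N - v),
            c j k1 r * (starRingEnd ℂ) (c ((j + u) % M) k2 (r + v)))
        + (eph M ((i : ℤ) * j) *
            (starRingEnd ℂ)
              (eph M (((i + (j + (u + 1)) / M : ℕ) : ℤ) * (((j + (u + 1)) % M : ℕ) : ℤ)))) *
          (∑ t ∈ Finset.range v,
            c j k1 (N - v + t) * (starRingEnd ℂ) (c ((j + (u + 1)) % M) k2 t))))
      = (∑ i ∈ Finset.range M, eph M ((i : ℤ) * j) *
          (starRingEnd ℂ) (eph M (((i + (j + u) / M : ℕ) : ℤ) * (((j + u) % M : ℕ) : ℤ)))) *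
          (∑ r ∈ Finset.range (N - v),
            c j k1 r * (starRingEnd ℂ) (c ((j + u) % M) k2 (r + v)))
        + (∑ i ∈ Finset.range M, eph M ((i : ℤ) * j) *
            (starRingEnd ℂ)
              (eph M (((i + (j + (u + 1)) / M : ℕ) : ℤ) * (((j + (u + 1)) % M : ℕ) : ℤ)))) *
          (∑ t ∈ Finset.range v,
            c j k1 (N - v + t) * (starRingEnd ℂ) (c ((j + (u + 1)) % M) k2 t)) := by
    intro j _
    rw [Finset.sum_add_distrib, ← Finset.sum_mul, ← Finset.sum_mul]
  rw [Finset.sum_congr rfl step3, Finset.sum_add_distrib]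
  have hsecond : ∑ j ∈ Finset.range M,
      (∑ i ∈ Finset.range M, eph M ((i : ℤ) * j) *
          (starRingEnd ℂ)
            (eph M (((i + (j + (u + 1)) / M : ℕ) : ℤ) * (((j + (u + 1)) % M : ℕ) : ℤ)))) *
        (∑ t ∈ Finset.range v,
          c j k1 (N - v + t) * (starRingEnd ℂ) (c ((j + (u + 1)) % M) k2 t)) = 0 := by
    by_cases hv0 : v = 0
    · simp [hv0]
    · have hu1 : u + 1 < M := by
        rcases Nat.lt_or_ge u (M - 1) with h | h
        · omega
        · have hu' : u = M - 1 := by omega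
          rw [hu'] at huv
          have : v = 0 := by
            have h1 : (M - 1) * N + v ≤ (M - 1) * N := by rw [huv]; exact hτ
            omega
          exact absurd this hv0
      have hndvd : ¬ M ∣ (u + 1) := by
        intro hdvd
        have := Nat.le_of_dvd (by omega) hdvd
        omega
      refine Finset.sum_eq_zero fun j hj => ?_
      rw [Finset.mem_range] at hj
      rw [phase_sum_zero M hM (u + 1) j hj hndvd, zero_mul]
  have hfirst : ∑ j ∈ Finset.range M,
      (∑ i ∈ Finset.range M, eph M ((i : ℤ) * j) *
          (starRingEnd ℂ) (eph M (((i + (j + u) / M : ℕ) : ℤ) * (((j + u) % M : ℕ) : ℤ)))) *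
        (∑ r ∈ Finset.range (N - v),
          c j k1 r * (starRingEnd ℂ) (c ((j + u) % M) k2 (r + v))) = 0 := by
    by_cases hu0 : u = 0
    · have hph : ∀ j < M,
          (∑ i ∈ Finset.range M, eph M ((i : ℤ) * j) *
            (starRingEnd ℂ) (eph M (((i + (j + u) / M : ℕ) : ℤ) * (((j + u) % M : ℕ) : ℤ))))
          = (M : ℂ) := by
        intro j hj
        have hdq : (j + u) / M = 0 := by
          rw [hu0, Nat.add_zero]; exact Nat.div_eq_of_lt hj
        have hmq : (j + u) % M = j := by
          rw [hu0, Nat.add_zero]; exact Nat.mod_eq_of_lt hj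
        have hone : ∀ i : ℕ, eph M ((i : ℤ) * j) *
            (starRingEnd ℂ) (eph M (((i + (j + u) / M : ℕ) : ℤ) * (((j + u) % M : ℕ) : ℤ)))
            = 1 := by
          intro i
          rw [hdq, hmq, conj_eph, ← eph_add, add_zero,
            show ((i : ℤ) * j + -((i : ℤ) * j) = 0) by ring]
          simp [eph]
        rw [Finset.sum_congr rfl fun i _ => hone i]
        simp
      have hmq : ∀ j < M, (j + u) % M = j := fun j hj => by
        rw [hu0, Nat.add_zero]; exact Nat.mod_eq_of_lt hj
      have := transpose_ccc M N hM hN c hCCC k1 k2 hk1 hk2 hne v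
      unfold aCorr at this
      calc ∑ j ∈ Finset.range M,
          (∑ i ∈ Finset.range M, eph M ((i : ℤ) * j) *
            (starRingEnd ℂ) (eph M (((i + (j + u) / M : ℕ) : ℤ) * (((j + u) % M : ℕ) : ℤ)))) *
          (∑ r ∈ Finset.range (N - v),
            c j k1 r * (starRingEnd ℂ) (c ((j + u) % M) k2 (r + v)))
          = ∑ j ∈ Finset.range M, (M : ℂ) *
            (∑ r ∈ Finset.range (N - v),
              c j k1 r * (starRingEnd ℂ) (c j k2 (r + v))) := by
            refine Finset.sum_congr rfl fun j hj => ?_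
            rw [Finset.mem_range] at hj
            rw [hph j hj, hmq j hj]
        _ = (M : ℂ) * ∑ j ∈ Finset.range M,
            (∑ r ∈ Finset.range (N - v),
              c j k1 r * (starRingEnd ℂ) (c j k2 (r + v))) := by
            rw [Finset.mul_sum]
        _ = 0 := by rw [this, mul_zero]
    · have hndvd : ¬ M ∣ u := by
        intro hdvd
        have := Nat.le_of_dvd (by omega) hdvd
        omega
      refine Finset.sum_eq_zero fun j hj => ?_
      rw [Finset.mem_range] at hj
      rw [phase_sum_zero M hM u j hj hndvd, zero_mul]
  rw [hfirst, hsecond, add_zero]
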